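/- Let θ = (1 + √5)/2, θ̄ = (1 − √5)/2, α = 1 + i(1 − θ), ᾱ = 1 + i(1 − θ̄). For a, b, c, d ∈ ℤ[i], let X(a,b,c,d) = (1/√5)·[[α(a + bθ), α(c + dθ)], [i·ᾱ(c + dθ̄), ᾱ(a + bθ̄)]] ∈ M_2(ℂ). Then for all (a, b, c, d) ≠ (0, 0, 0, 0), |det X(a,b,c,d)| ≥ 1/√5; that is, the Golden code lattice L_gold = {X(a,b,c,d) : a, b, c, d ∈ ℤ[i]}, an 8-dimensional matrix lattice in M_2(ℂ), satisfies the non-vanishing determinant property. -/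

import Mathlib

/-- A complex number is a Gaussian integer if it is of the form `p + q·i`
with `p, q ∈ ℤ`. -/
def IsGaussianInt (a : ℂ) : Prop :=
  ∃ p q : ℤ, a = (p : ℂ) + (q : ℂ) * Complex.I

/-- The golden ratio `θ = (1 + √5)/2`. -/
noncomputable def goldenθ : ℝ := (1 + Real.sqrt 5) / 2

/-- Its conjugate `θ̄ = (1 - √5)/2`. -/
noncomputable def goldenθbar : ℝ := (1 - Real.sqrt 5) / 2

/-- `α = 1 + i(1 - θ)`. -/
noncomputable def goldenα : ℂ := 1 + Complex.I * (1 - (goldenθ : ℂ))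

/-- `ᾱ = 1 + i(1 - θ̄)`. -/
noncomputable def goldenαbar : ℂ := 1 + Complex.I * (1 - (goldenθbar : ℂ))

/-- The Golden code codeword
`X(a,b,c,d) = (1/√5)·[[α(a+bθ), α(c+dθ)], [i·ᾱ(c+dθ̄), ᾱ(a+bθ̄)]]`. -/
noncomputable def goldenX (a b c d : ℂ) : Matrix (Fin 2) (Fin 2) ℂ :=
  ((Real.sqrt 5 : ℂ))⁻¹ •
    !![goldenα * (a + b * (goldenθ : ℂ)), goldenα * (c + d * (goldenθ : ℂ));
       Complex.I * goldenαbar * (c + d * (goldenθbar : ℂ)),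
       goldenαbar * (a + b * (goldenθbar : ℂ))]

/-- The Golden code lattice `L_gold = {X(a,b,c,d) : a, b, c, d ∈ ℤ[i]}`. -/
def Lgold : Set (Matrix (Fin 2) (Fin 2) ℂ) :=
  {X | ∃ a b c d : ℂ, IsGaussianInt a ∧ IsGaussianInt b ∧ IsGaussianInt c ∧
    IsGaussianInt d ∧ X = goldenX a b c d}

/- ### Auxiliary lemmas -/

lemma zmod5_aux : ∀ a b c d : ZMod 5, a^2 - b^2 + 2*c*d = 0 → 2*a*b - c^2 + d^2 = 0 →
    a = 0 ∧ b = 0 ∧ c = 0 ∧ d = 0 := by decide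

lemma mod5_zero {x y z w : ℤ} (h1 : ((x^2 - y^2 + 2*z*w : ℤ) : ZMod 5) = 0)
    (h2 : ((2*x*y - z^2 + w^2 : ℤ) : ZMod 5) = 0) :
    (5:ℤ) ∣ x ∧ (5:ℤ) ∣ y ∧ (5:ℤ) ∣ z ∧ (5:ℤ) ∣ w := by
  push_cast at h1 h2
  obtain ⟨hx, hy, hz, hw⟩ := zmod5_aux (x:ZMod 5) (y:ZMod 5) (z:ZMod 5) (w:ZMod 5) h1 h2
  rw [ZMod.intCast_zmod_eq_zero_iff_dvd] at hx hy hz hw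
  exact ⟨by exact_mod_cast hx, by exact_mod_cast hy, by exact_mod_cast hz, by exact_mod_cast hw⟩

lemma cast5mul (k : ℤ) : ((5 * k : ℤ) : ZMod 5) = 0 := by
  rw [show ((5:ℤ) * k) = ((5:ℕ):ℤ) * k by norm_num]
  rw [ZMod.intCast_zmod_eq_zero_iff_dvd]
  exact Dvd.intro _ rfl

/-- Infinite descent: `U² - iS² = 5(V² - iT²)` has only the trivial solution in `ℤ[i]`,
written out in real/imaginary components. -/
lemma descent : ∀ n : ℕ, ∀ u1 u2 s1 s2 v1 v2 t1 t2 : ℤ,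
    u1.natAbs + u2.natAbs + s1.natAbs + s2.natAbs + v1.natAbs + v2.natAbs + t1.natAbs + t2.natAbs = n →
    u1^2 - u2^2 + 2*s1*s2 = 5*(v1^2 - v2^2 + 2*t1*t2) →
    2*u1*u2 - s1^2 + s2^2 = 5*(2*v1*v2 - t1^2 + t2^2) →
    u1 = 0 ∧ u2 = 0 ∧ s1 = 0 ∧ s2 = 0 ∧ v1 = 0 ∧ v2 = 0 ∧ t1 = 0 ∧ t2 = 0 := by
  intro n
  induction n using Nat.strong_induction_on with
  | _ n ih =>
    intro u1 u2 s1 s2 v1 v2 t1 t2 hn h1 h2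
    have hus : (5:ℤ) ∣ u1 ∧ (5:ℤ) ∣ u2 ∧ (5:ℤ) ∣ s1 ∧ (5:ℤ) ∣ s2 := by
      apply mod5_zero
      · rw [h1]; exact cast5mul _
      · rw [h2]; exact cast5mul _
    obtain ⟨⟨u1', rfl⟩, ⟨u2', rfl⟩, ⟨s1', rfl⟩, ⟨s2', rfl⟩⟩ := hus
    have e1 : v1^2 - v2^2 + 2*t1*t2 = 5*(u1'^2 - u2'^2 + 2*s1'*s2') :=
      mul_left_cancel₀ (by norm_num : (5:ℤ) ≠ 0) (by linear_combination -h1)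
    have e2 : 2*v1*v2 - t1^2 + t2^2 = 5*(2*u1'*u2' - s1'^2 + s2'^2) :=
      mul_left_cancel₀ (by norm_num : (5:ℤ) ≠ 0) (by linear_combination -h2)
    have hvt : (5:ℤ) ∣ v1 ∧ (5:ℤ) ∣ v2 ∧ (5:ℤ) ∣ t1 ∧ (5:ℤ) ∣ t2 := by
      apply mod5_zero
      · rw [e1]; exact cast5mul _
      · rw [e2]; exact cast5mul _
    obtain ⟨⟨v1', rfl⟩, ⟨v2', rfl⟩, ⟨t1', rfl⟩, ⟨t2', rfl⟩⟩ := hvt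
    have nh1 : u1'^2 - u2'^2 + 2*s1'*s2' = 5*(v1'^2 - v2'^2 + 2*t1'*t2') :=
      mul_left_cancel₀ (by norm_num : (25:ℤ) ≠ 0) (by linear_combination h1)
    have nh2 : 2*u1'*u2' - s1'^2 + s2'^2 = 5*(2*v1'*v2' - t1'^2 + t2'^2) :=
      mul_left_cancel₀ (by norm_num : (25:ℤ) ≠ 0) (by linear_combination h2)
    have habs : ∀ x : ℤ, (5*x).natAbs = 5 * x.natAbs := by
      intro x; rw [Int.natAbs_mul]; rfl
    simp only [habs] at hn
    set m := u1'.natAbs + u2'.natAbs + s1'.natAbs + s2'.natAbs + v1'.natAbs + v2'.natAbs + t1'.natAbs + t2'.natAbs with hm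
    rcases Nat.eq_zero_or_pos m with h0 | hpos
    · have : u1'.natAbs = 0 ∧ u2'.natAbs = 0 ∧ s1'.natAbs = 0 ∧ s2'.natAbs = 0 ∧
          v1'.natAbs = 0 ∧ v2'.natAbs = 0 ∧ t1'.natAbs = 0 ∧ t2'.natAbs = 0 := by omega
      obtain ⟨a1, a2, a3, a4, a5, a6, a7, a8⟩ := this
      rw [Int.natAbs_eq_zero] at a1 a2 a3 a4 a5 a6 a7 a8
      subst a1 a2 a3 a4 a5 a6 a7 a8
      norm_num
    · have hlt : m < n := by omega
      obtain ⟨b1, b2, b3, b4, b5, b6, b7, b8⟩ :=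
        ih m hlt u1' u2' s1' s2' v1' v2' t1' t2' rfl nh1 nh2
      subst b1 b2 b3 b4 b5 b6 b7 b8
      norm_num

lemma hs5 : ((Real.sqrt 5 : ℝ) : ℂ)^2 = 5 := by
  rw [← Complex.ofReal_pow, Real.sq_sqrt (by norm_num : (5:ℝ) ≥ 0)]
  norm_num

lemma halphas : goldenα * goldenαbar = 2 + Complex.I := by
  unfold goldenα goldenαbar goldenθ goldenθbar
  push_cast
  linear_combination (1/4 : ℂ) * hs5 + ((1 - ((Real.sqrt 5 : ℝ) : ℂ)^2)/4) * Complex.I_sq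

lemma hquad (x y : ℂ) :
    (x + y * (goldenθ : ℂ)) * (x + y * (goldenθbar : ℂ)) = x^2 + x*y - y^2 := by
  unfold goldenθ goldenθbar
  push_cast
  linear_combination (-(y^2)/4 : ℂ) * hs5

/-- Determinant formula for a Golden code codeword. -/
lemma det_golden (a b c d : ℂ) :
    (goldenX a b c d).det
      = (2 + Complex.I)/5 * ((a^2 + a*b - b^2) - Complex.I * (c^2 + c*d - d^2)) := by
  have expand : (goldenX a b c d).det
      = ((Real.sqrt 5 : ℂ))⁻¹^2 *
        ((goldenα * goldenαbar) * ((a + b * (goldenθ:ℂ)) * (a + b * (goldenθbar:ℂ)))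
          - Complex.I * (goldenα * goldenαbar) *
            ((c + d * (goldenθ:ℂ)) * (c + d * (goldenθbar:ℂ)))) := by
    rw [goldenX, Matrix.det_smul, Matrix.det_fin_two_of]
    simp only [Fintype.card_fin]
    ring
  rw [expand, halphas, hquad a b, hquad c d]
  have h5 : ((Real.sqrt 5 : ℂ))⁻¹^2 = 1/5 := by
    rw [inv_pow, hs5]; norm_num
  rw [h5]; ring

open Complex in
/-- Real/imaginary components of the reduced determinant. -/
lemma z_comp (p1 q1 p2 q2 p3 q3 p4 q4 : ℤ) :
    (((p1:ℂ) + q1*I)^2 + ((p1:ℂ) + q1*I)*((p2:ℂ) + q2*I) - ((p2:ℂ) + q2*I)^2)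
      - I * ((((p3:ℂ) + q3*I))^2 + ((p3:ℂ) + q3*I)*((p4:ℂ) + q4*I) - ((p4:ℂ) + q4*I)^2)
    = ((p1^2 + p1*p2 - p2^2 - (q1^2 + q1*q2 - q2^2) + (2*p3*q3 + p3*q4 + q3*p4 - 2*p4*q4) : ℤ) : ℂ)
      + ((2*p1*q1 + p1*q2 + q1*p2 - 2*p2*q2 - (p3^2 + p3*p4 - p4^2) + (q3^2 + q3*q4 - q4^2) : ℤ) : ℂ) * I := by
  push_cast
  linear_combination (((q1:ℂ)^2 + q1*q2 - q2^2 - (2*p3*q3 + p3*q4 + q3*p4 - 2*p4*q4))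
      + (-((q3:ℂ)^2 + q3*q4 - q4^2)) * I) * Complex.I_sq

/-- The reduced determinant components are not both zero for a nonzero codeword. -/
lemma mn_ne_zero (p1 q1 p2 q2 p3 q3 p4 q4 : ℤ)
    (hne : ¬(p1 = 0 ∧ q1 = 0 ∧ p2 = 0 ∧ q2 = 0 ∧ p3 = 0 ∧ q3 = 0 ∧ p4 = 0 ∧ q4 = 0)) :
    ¬((p1^2 + p1*p2 - p2^2 - (q1^2 + q1*q2 - q2^2) + (2*p3*q3 + p3*q4 + q3*p4 - 2*p4*q4) : ℤ) = 0
      ∧ (2*p1*q1 + p1*q2 + q1*p2 - 2*p2*q2 - (p3^2 + p3*p4 - p4^2) + (q3^2 + q3*q4 - q4^2) : ℤ) = 0) := by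
  rintro ⟨hm, hn⟩
  apply hne
  obtain ⟨b1, b2, b3, b4, b5, b6, b7, b8⟩ :=
    descent _ (2*p1+p2) (2*q1+q2) (2*p3+p4) (2*q3+q4) p2 q2 p4 q4 rfl
      (by linear_combination 4*hm) (by linear_combination 4*hn)
  refine ⟨by omega, by omega, b5, b6, by omega, by omega, b7, b8⟩

/-- The main pointwise bound. -/
lemma golden_bound (a b c d : ℂ) (ha : IsGaussianInt a) (hb : IsGaussianInt b)
    (hc : IsGaussianInt c) (hd : IsGaussianInt d) (h : ¬(a = 0 ∧ b = 0 ∧ c = 0 ∧ d = 0)) :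
    1 / Real.sqrt 5 ≤ ‖(goldenX a b c d).det‖ := by
  obtain ⟨p1, q1, rfl⟩ := ha
  obtain ⟨p2, q2, rfl⟩ := hb
  obtain ⟨p3, q3, rfl⟩ := hc
  obtain ⟨p4, q4, rfl⟩ := hd
  have hcomp : ¬(p1 = 0 ∧ q1 = 0 ∧ p2 = 0 ∧ q2 = 0 ∧ p3 = 0 ∧ q3 = 0 ∧ p4 = 0 ∧ q4 = 0) := by
    rintro ⟨rfl, rfl, rfl, rfl, rfl, rfl, rfl, rfl⟩
    exact h (by norm_num)
  set m : ℤ := p1^2 + p1*p2 - p2^2 - (q1^2 + q1*q2 - q2^2) + (2*p3*q3 + p3*q4 + q3*p4 - 2*p4*q4) with hmdef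
  set n : ℤ := 2*p1*q1 + p1*q2 + q1*p2 - 2*p2*q2 - (p3^2 + p3*p4 - p4^2) + (q3^2 + q3*q4 - q4^2) with hndef
  have hmn : ¬(m = 0 ∧ n = 0) := mn_ne_zero p1 q1 p2 q2 p3 q3 p4 q4 hcomp
  rw [det_golden, z_comp p1 q1 p2 q2 p3 q3 p4 q4]
  rw [← hmdef, ← hndef]
  rw [norm_mul]
  have habs1 : ‖(2 + Complex.I)/5‖ = Real.sqrt 5 / 5 := by
    rw [norm_div, Complex.norm_def]
    congr 1
    · congr 1
      simp [Complex.normSq_apply]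
      norm_num
    · simp
  have hz1 : (1:ℝ) ≤ ‖(m:ℂ) + (n:ℂ) * Complex.I‖ := by
    have hsq : (‖(m:ℂ) + (n:ℂ) * Complex.I‖)^2 = (m:ℝ)^2 + (n:ℝ)^2 := by
      rw [Complex.sq_norm, Complex.normSq_apply]
      simp
      ring
    have hge : (1:ℤ) ≤ m^2 + n^2 := by
      have hor : m ≠ 0 ∨ n ≠ 0 := by tauto
      rcases hor with hm0 | hn0
      · nlinarith [sq_pos_of_ne_zero hm0, sq_nonneg n]
      · nlinarith [sq_pos_of_ne_zero hn0, sq_nonneg m]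
    have hger : (1:ℝ) ≤ (m:ℝ)^2 + (n:ℝ)^2 := by exact_mod_cast hge
    nlinarith [norm_nonneg ((m:ℂ) + (n:ℂ) * Complex.I)]
  rw [habs1]
  have h5pos : (0:ℝ) < Real.sqrt 5 := Real.sqrt_pos.mpr (by norm_num)
  have h55 : Real.sqrt 5 * Real.sqrt 5 = 5 := Real.mul_self_sqrt (by norm_num)
  have hkey : 1 / Real.sqrt 5 = Real.sqrt 5 / 5 := by
    rw [div_eq_div_iff h5pos.ne' (by norm_num : (5:ℝ) ≠ 0), one_mul]
    exact h55.symm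
  rw [hkey]
  calc Real.sqrt 5 / 5 = Real.sqrt 5 / 5 * 1 := by ring
    _ ≤ Real.sqrt 5 / 5 * ‖(m:ℂ) + (n:ℂ) * Complex.I‖ := by
        apply mul_le_mul_of_nonneg_left hz1 (by positivity)

/-- Every nonzero Golden code codeword has `|det X| ≥ 1/√5`; in particular the
Golden code lattice satisfies the non-vanishing determinant property. -/
theorem golden_code_NVD :
    (∀ a b c d : ℂ, IsGaussianInt a → IsGaussianInt b → IsGaussianInt c →
      IsGaussianInt d → ¬(a = 0 ∧ b = 0 ∧ c = 0 ∧ d = 0) →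
      1 / Real.sqrt 5 ≤ ‖(goldenX a b c d).det‖) ∧
    0 < sInf ((fun X => ‖X.det‖) '' {X | X ∈ Lgold ∧ X ≠ 0}) := by
  constructor
  · exact golden_bound
  · have hg1 : IsGaussianInt 1 := ⟨1, 0, by norm_num⟩
    have hg0 : IsGaussianInt 0 := ⟨0, 0, by norm_num⟩
    have hXne : goldenX 1 0 0 0 ≠ 0 := by
      intro hX
      have := golden_bound 1 0 0 0 hg1 hg0 hg0 hg0 (by norm_num)
      rw [hX] at this
      simp [Matrix.det_zero] at this
      have h5pos : (0:ℝ) < Real.sqrt 5 := Real.sqrt_pos.mpr (by norm_num)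
      nlinarith
    have hnonempty : Set.Nonempty ((fun X => ‖X.det‖) '' {X | X ∈ Lgold ∧ X ≠ 0}) := by
      exact ⟨_, ⟨goldenX 1 0 0 0, ⟨⟨1, 0, 0, 0, hg1, hg0, hg0, hg0, rfl⟩, hXne⟩, rfl⟩⟩
    have hbound : ∀ y ∈ (fun X => ‖X.det‖) '' {X | X ∈ Lgold ∧ X ≠ 0},
        1 / Real.sqrt 5 ≤ y := by
      rintro y ⟨X, ⟨⟨a, b, c, d, ha, hb, hc, hd, rfl⟩, hX0⟩, rfl⟩
      apply golden_bound a b c d ha hb hc hd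
      rintro ⟨rfl, rfl, rfl, rfl⟩
      apply hX0
      unfold goldenX
      norm_num
      ext i j
      fin_cases i <;> fin_cases j <;> simp
    have h5pos : (0:ℝ) < Real.sqrt 5 := Real.sqrt_pos.mpr (by norm_num)
    calc (0:ℝ) < 1 / Real.sqrt 5 := by positivity
      _ ≤ _ := le_csInf hnonempty hbound
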